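/- arXiv:2003.11132 — 2 statements merged into one kernel-verified Lean document; each statement's English description precedes it below -/
import Mathlib

section
/- Let 𝒯 be a tree ensemble on ℝ^p, let (z^L,z^R) be a region, and let j be a feature and l a level with z^L_j ≤ l < z^R_j. Then max{Φ(z^L,z^R_{jl}), Φ(z^L_{jl},z^R)} ≤ Φ(z^L,z^R) ≤ 𝟙_{jl}(z^L,z^R) + max{Φ(z^L,z^R_{jl}), Φ(z^L_{jl},z^R)}. -/
/-- A decision tree on `ℝ^p`: either a leaf labeled with a class `c : ℕ`,
or an internal node splitting on feature `j` with threshold `t`. -/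
inductive DTree (p : ℕ) : Type where
  | leaf (c : ℕ) : DTree p
  | node (j : Fin p) (t : ℝ) (L R : DTree p) : DTree p

namespace DTree

/-- Evaluation of a decision tree at a point `x : ℝ^p`. -/
noncomputable def eval {p : ℕ} : DTree p → (Fin p → ℝ) → ℕ
  | leaf c, _ => c
  | node j t L R, x => if x j ≤ t then L.eval x else R.eval x

/-- Depth `Φ(T)` of a decision tree. -/
def depth {p : ℕ} : DTree p → ℕ
  | leaf _ => 0
  | node _ _ L R => 1 + max L.depth R.depth

/-- Number of leaves `L(T)` of a decision tree. -/
def leaves {p : ℕ} : DTree p → ℕ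
  | leaf _ => 1
  | node _ _ L R => L.leaves + R.leaves

/-- The set of splits `(j, t)` occurring at internal nodes of a tree. -/
def splits {p : ℕ} : DTree p → Set (Fin p × ℝ)
  | leaf _ => ∅
  | node j t L R => insert (j, t) (L.splits ∪ R.splits)

end DTree

/-- A tree ensemble: a finite nonempty family of decision trees with positive weights. -/
structure Ensemble (p : ℕ) : Type where
  m : ℕ
  m_pos : 0 < m
  tree : Fin m → DTree p
  weight : Fin m → ℝ
  weight_pos : ∀ i, 0 < weight i

namespace Ensemble

/-- Total weight of the trees voting for class `c` at point `x`. -/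
noncomputable def score {p : ℕ} (E : Ensemble p) (x : Fin p → ℝ) (c : ℕ) : ℝ :=
  ∑ i ∈ Finset.univ.filter (fun i => (E.tree i).eval x = c), E.weight i

/-- The decision function of the ensemble: the smallest class maximizing the weighted vote. -/
noncomputable def F {p : ℕ} (E : Ensemble p) (x : Fin p → ℝ) : ℕ :=
  sInf {c : ℕ | ∀ c' : ℕ, E.score x c' ≤ E.score x c}

/-- The set `H j` of thresholds appearing in splits on feature `j` in trees of the ensemble. -/
def H {p : ℕ} (E : Ensemble p) (j : Fin p) : Set ℝ :=
  {t : ℝ | ∃ i, (j, t) ∈ (E.tree i).splits}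

end Ensemble

/-- `T` is faithful to the ensemble `E` on the set `S`. -/
def Faithful {p : ℕ} (T : DTree p) (E : Ensemble p) (S : Set (Fin p → ℝ)) : Prop :=
  ∀ x ∈ S, T.eval x = E.F x
/-- A cell: for each feature `j`, an index in `{0, …, n j}` (0-indexed version of `{1, …, |H_j|+1}`). -/
abbrev Cell {p : ℕ} (n : Fin p → ℕ) : Type := ∀ j, Fin (n j + 1)

/-- The open box `B(z)` associated with a cell `z`, given for each feature `j` the
increasing enumeration `h j : Fin (n j) → ℝ` of the thresholds: `x j` lies strictly above
every threshold of index `< z j` and strictly below every threshold of index `≥ z j`. -/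
def Box {p : ℕ} (n : Fin p → ℕ) (h : ∀ j, Fin (n j) → ℝ) (z : Cell n) : Set (Fin p → ℝ) :=
  {x | ∀ j, (∀ k : Fin (n j), (k : ℕ) < (z j : ℕ) → h j k < x j) ∧
            (∀ k : Fin (n j), (z j : ℕ) ≤ (k : ℕ) → x j < h j k)}

/-- The cell `z` is enclosed in the region `(zL, zR)`. -/
def Encl {p : ℕ} {n : Fin p → ℕ} (zL zR z : Cell n) : Prop :=
  ∀ j, (zL j : ℕ) ≤ (z j : ℕ) ∧ (z j : ℕ) ≤ (zR j : ℕ)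

/-- The subset of `ℝ^p` covered by the region `(zL, zR)`: the union of the boxes of the
cells it encloses. -/
def RegionSet {p : ℕ} (n : Fin p → ℕ) (h : ∀ j, Fin (n j) → ℝ) (zL zR : Cell n) :
    Set (Fin p → ℝ) :=
  ⋃ z ∈ {z : Cell n | Encl zL zR z}, Box n h z

/-- `Φ(zL, zR)`: the minimum depth of a decision tree faithful to `E` on the region `(zL, zR)`. -/
noncomputable def Phi {p : ℕ} (E : Ensemble p) (n : Fin p → ℕ) (h : ∀ j, Fin (n j) → ℝ)
    (zL zR : Cell n) : ℕ :=
  sInf {d : ℕ | ∃ T : DTree p, Faithful T E (RegionSet n h zL zR) ∧ T.depth = d}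

/-- `Λ(zL, zR)`: the minimum number of leaves of a decision tree faithful to `E` on `(zL, zR)`. -/
noncomputable def Lam {p : ℕ} (E : Ensemble p) (n : Fin p → ℕ) (h : ∀ j, Fin (n j) → ℝ)
    (zL zR : Cell n) : ℕ :=
  sInf {d : ℕ | ∃ T : DTree p, Faithful T E (RegionSet n h zL zR) ∧ T.leaves = d}

/-- `z^R_{jl}`: replace the `j`-th coordinate of `zR` by `l`. -/
def splitR {p : ℕ} {n : Fin p → ℕ} (zR : Cell n) (j : Fin p) (l : Fin (n j)) : Cell n :=
  Function.update zR j l.castSucc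

/-- `z^L_{jl}`: replace the `j`-th coordinate of `zL` by `l + 1`. -/
def splitL {p : ℕ} {n : Fin p → ℕ} (zL : Cell n) (j : Fin p) (l : Fin (n j)) : Cell n :=
  Function.update zL j l.succ

/-- The cells `z` and `z'` have the same (weighted majority) class under `E`. -/
def SameClass {p : ℕ} (E : Ensemble p) (n : Fin p → ℕ) (h : ∀ j, Fin (n j) → ℝ)
    (z z' : Cell n) : Prop :=
  ∀ x ∈ Box n h z, ∀ y ∈ Box n h z', E.F x = E.F y

open Classical in
/-- The indicator `𝟙_{jl}(z^L, z^R)`. -/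
noncomputable def ind {p : ℕ} (E : Ensemble p) (n : Fin p → ℕ) (h : ∀ j, Fin (n j) → ℝ)
    (zL zR : Cell n) (j : Fin p) (l : Fin (n j)) : ℕ :=
  if Phi E n h zL (splitR zR j l) = 0 ∧ Phi E n h (splitL zL j l) zR = 0 ∧ SameClass E n h zL zR
  then 0 else 1

section Aux

variable {p : ℕ} {n : Fin p → ℕ} (h : ∀ j, Fin (n j) → ℝ)

/-- A point of any box avoids all thresholds strictly: `x j ≤ h j k ↔ z j ≤ k`. -/
lemma box_le_iff {z : Cell n} {x : Fin p → ℝ} (hx : x ∈ Box n h z)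
    (j : Fin p) (k : Fin (n j)) : x j ≤ h j k ↔ (z j : ℕ) ≤ (k : ℕ) := by
  constructor
  · intro hle
    by_contra hk
    have := (hx j).1 k (by omega)
    linarith
  · intro hk
    exact ((hx j).2 k hk).le

/-- Evaluation of a tree whose splits all lie on the grid is constant on boxes. -/
lemma eval_const_on_box {z : Cell n} {x y : Fin p → ℝ}
    (hx : x ∈ Box n h z) (hy : y ∈ Box n h z) :
    ∀ T : DTree p, (∀ s ∈ T.splits, s.2 ∈ Set.range (h s.1)) → T.eval x = T.eval y := by
  intro T
  induction T with
  | leaf c => intro _; rfl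
  | node j t L R ihL ihR =>
    intro hs
    obtain ⟨k, hk⟩ := hs (j, t) (by simp [DTree.splits])
    have hk2 : h j k = t := hk
    have hL : ∀ s ∈ L.splits, s.2 ∈ Set.range (h s.1) := fun s hmem =>
      hs s (by simp [DTree.splits]; tauto)
    have hR : ∀ s ∈ R.splits, s.2 ∈ Set.range (h s.1) := fun s hmem =>
      hs s (by simp [DTree.splits]; tauto)
    have : (x j ≤ t) ↔ (y j ≤ t) := by
      rw [← hk2, box_le_iff h hx, box_le_iff h hy]
    simp only [DTree.eval]
    by_cases hxt : x j ≤ t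
    · rw [if_pos hxt, if_pos (this.mp hxt), ihL hL]
    · rw [if_neg hxt, if_neg (fun hyt => hxt (this.mpr hyt)), ihR hR]

/-- The ensemble decision function is constant on boxes. -/
lemma F_const_on_box {E : Ensemble p} (hcov : ∀ j, E.H j = Set.range (h j))
    {z : Cell n} {x y : Fin p → ℝ} (hx : x ∈ Box n h z) (hy : y ∈ Box n h z) :
    E.F x = E.F y := by
  have hev : ∀ i, (E.tree i).eval x = (E.tree i).eval y := by
    intro i
    refine eval_const_on_box h hx hy _ (fun s hmem => ?_)
    rw [← hcov s.1]
    exact ⟨i, hmem⟩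
  have hsc : ∀ c, E.score x c = E.score y c := by
    intro c
    unfold Ensemble.score
    congr 1
    ext i
    simp [hev i]
  unfold Ensemble.F
  congr 1
  ext c
  simp [hsc]

/-- A representative point of each (nonempty) box. -/
noncomputable def rep (n : Fin p → ℕ) (h : ∀ j, Fin (n j) → ℝ) (z : Cell n) :
    Fin p → ℝ := fun j =>
  if hz : (z j : ℕ) = 0 then
    (if hn : 0 < n j then h j ⟨0, hn⟩ - 1 else 0)
  else
    if hz2 : (z j : ℕ) < n j then
      (h j ⟨(z j : ℕ) - 1, by omega⟩ + h j ⟨(z j : ℕ), hz2⟩) / 2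
    else h j ⟨(z j : ℕ) - 1, by have := (z j).isLt; omega⟩ + 1

lemma rep_mem (hmono : ∀ j, StrictMono (h j)) (z : Cell n) : rep n h z ∈ Box n h z := by
  intro j
  constructor
  · intro k hk
    have hz : (z j : ℕ) ≠ 0 := by omega
    have hle : h j k ≤ h j ⟨(z j : ℕ) - 1, by have := k.isLt; omega⟩ :=
      (hmono j).monotone (by simp [Fin.le_def]; omega)
    refine lt_of_le_of_lt hle ?_
    unfold rep
    rw [dif_neg hz]
    by_cases hz2 : (z j : ℕ) < n j
    · rw [dif_pos hz2]
      have : h j ⟨(z j : ℕ) - 1, by omega⟩ < h j ⟨(z j : ℕ), hz2⟩ :=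
        hmono j (by show (z j : ℕ) - 1 < (z j : ℕ); omega)
      linarith
    · rw [dif_neg hz2]
      linarith
  · intro k hk
    have hz2 : (z j : ℕ) < n j := lt_of_le_of_lt hk k.isLt
    have hle : h j ⟨(z j : ℕ), hz2⟩ ≤ h j k := (hmono j).monotone (by simp [Fin.le_def]; omega)
    refine lt_of_lt_of_le ?_ hle
    unfold rep
    by_cases hz : (z j : ℕ) = 0
    · rw [dif_pos hz, dif_pos (by omega : 0 < n j)]
      have : h j ⟨0, by omega⟩ = h j ⟨(z j : ℕ), hz2⟩ := by congr 1; simp [Fin.ext_iff]; omega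
      linarith [this]
    · rw [dif_neg hz, dif_pos hz2]
      have : h j ⟨(z j : ℕ) - 1, by omega⟩ < h j ⟨(z j : ℕ), hz2⟩ :=
        hmono j (by show (z j : ℕ) - 1 < (z j : ℕ); omega)
      linarith

/-- A gadget tree testing whether the input's cell `z'` agrees with `z` on a list of splits. -/
def check (h : ∀ j, Fin (n j) → ℝ) (z : Cell n) (Ty Tn : DTree p) :
    List ((j : Fin p) × Fin (n j)) → DTree p
  | [] => Ty
  | ⟨j, k⟩ :: L =>
    if (k : ℕ) < (z j : ℕ) then DTree.node j (h j k) Tn (check h z Ty Tn L)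
    else DTree.node j (h j k) (check h z Ty Tn L) Tn

open Classical in
lemma check_eval (z : Cell n) (Ty Tn : DTree p) {z' : Cell n} {x : Fin p → ℝ}
    (hx : x ∈ Box n h z') : ∀ L : List ((j : Fin p) × Fin (n j)),
    (check h z Ty Tn L).eval x =
      if ∀ s ∈ L, (((s.2 : ℕ) < (z s.1 : ℕ)) ↔ ((s.2 : ℕ) < (z' s.1 : ℕ)))
      then Ty.eval x else Tn.eval x := by
  intro L
  induction L with
  | nil => simp [check]
  | cons s L ih =>
    obtain ⟨j, k⟩ := s
    have hxk := box_le_iff h hx j k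
    have hcons : (∀ s ∈ ((⟨j, k⟩ : (j : Fin p) × Fin (n j)) :: L),
        (((s.2 : ℕ) < (z s.1 : ℕ)) ↔ ((s.2 : ℕ) < (z' s.1 : ℕ)))) ↔
        ((((k : ℕ) < (z j : ℕ)) ↔ ((k : ℕ) < (z' j : ℕ))) ∧
          ∀ s ∈ L, (((s.2 : ℕ) < (z s.1 : ℕ)) ↔ ((s.2 : ℕ) < (z' s.1 : ℕ)))) :=
      List.forall_mem_cons
    by_cases hks : (k : ℕ) < (z j : ℕ)
    · simp only [check, if_pos hks, DTree.eval]
      by_cases hxle : x j ≤ h j k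
      · have hk' : ¬ ((k : ℕ) < (z' j : ℕ)) := by have := hxk.mp hxle; omega
        rw [if_pos hxle, if_neg (fun hall => hk' ((hcons.mp hall).1.mp hks))]
      · have hk' : (k : ℕ) < (z' j : ℕ) := by
          by_contra hc; exact hxle (hxk.mpr (by omega))
        rw [if_neg hxle, ih]
        by_cases hall : ∀ s ∈ L, (((s.2 : ℕ) < (z s.1 : ℕ)) ↔ ((s.2 : ℕ) < (z' s.1 : ℕ)))
        · rw [if_pos hall, if_pos (hcons.mpr ⟨iff_of_true hks hk', hall⟩)]
        · rw [if_neg hall, if_neg (fun hc => hall (hcons.mp hc).2)]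
    · simp only [check, if_neg hks, DTree.eval]
      by_cases hxle : x j ≤ h j k
      · have hk' : ¬ ((k : ℕ) < (z' j : ℕ)) := by have := hxk.mp hxle; omega
        rw [if_pos hxle, ih]
        by_cases hall : ∀ s ∈ L, (((s.2 : ℕ) < (z s.1 : ℕ)) ↔ ((s.2 : ℕ) < (z' s.1 : ℕ)))
        · rw [if_pos hall, if_pos (hcons.mpr ⟨iff_of_false hks hk', hall⟩)]
        · rw [if_neg hall, if_neg (fun hc => hall (hcons.mp hc).2)]
      · have hk' : (k : ℕ) < (z' j : ℕ) := by
          by_contra hc; exact hxle (hxk.mpr (by omega))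
        rw [if_neg hxle, if_neg (fun hall => hks ((hcons.mp hall).1.mpr hk'))]

/-- The list of all splits of the grid. -/
def allPairs (n : Fin p → ℕ) : List ((j : Fin p) × Fin (n j)) :=
  (List.finRange p).flatMap (fun j => (List.finRange (n j)).map (fun k => ⟨j, k⟩))

lemma mem_allPairs (j : Fin p) (k : Fin (n j)) : (⟨j, k⟩ : (j : Fin p) × Fin (n j)) ∈ allPairs n := by
  unfold allPairs
  simp only [List.mem_flatMap, List.mem_map]
  exact ⟨j, List.mem_finRange j, k, List.mem_finRange k, rfl⟩

lemma eq_of_allPairs {z z' : Cell n}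
    (hall : ∀ s ∈ allPairs n, (((s.2 : ℕ) < (z s.1 : ℕ)) ↔ ((s.2 : ℕ) < (z' s.1 : ℕ)))) :
    z = z' := by
  funext j
  have hj : ∀ k : Fin (n j), ((k : ℕ) < (z j : ℕ)) ↔ ((k : ℕ) < (z' j : ℕ)) := fun k =>
    hall ⟨j, k⟩ (mem_allPairs j k)
  apply Fin.ext
  by_contra hne
  rcases Nat.lt_or_ge (z j : ℕ) (z' j : ℕ) with hlt | hge
  · have := (hj ⟨(z j : ℕ), by have := (z' j).isLt; omega⟩).mpr (by simpa using hlt)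
    simp at this
  · have hlt : (z' j : ℕ) < (z j : ℕ) := by omega
    have := (hj ⟨(z' j : ℕ), by have := (z j).isLt; omega⟩).mp (by simpa using hlt)
    simp at this

/-- The universal faithful tree: a chain over a list of cells. -/
noncomputable def chain (E : Ensemble p) (n : Fin p → ℕ) (h : ∀ j, Fin (n j) → ℝ) :
    List (Cell n) → DTree p
  | [] => DTree.leaf 0
  | z :: L => check h z (DTree.leaf (E.F (rep n h z))) (chain E n h L) (allPairs n)

lemma chain_eval (E : Ensemble p) (hmono : ∀ j, StrictMono (h j))
    (hcov : ∀ j, E.H j = Set.range (h j)) :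
    ∀ L : List (Cell n), ∀ z' ∈ L, ∀ x ∈ Box n h z', (chain E n h L).eval x = E.F x := by
  intro L
  induction L with
  | nil => intro z' hz'; simp at hz'
  | cons z L ih =>
    intro z' hz' x hx
    rw [chain, check_eval h z _ _ hx (allPairs n)]
    by_cases hall : ∀ s ∈ allPairs n, (((s.2 : ℕ) < (z s.1 : ℕ)) ↔ ((s.2 : ℕ) < (z' s.1 : ℕ)))
    · rw [if_pos hall]
      have hzz : z = z' := eq_of_allPairs hall
      subst hzz
      exact F_const_on_box h hcov (rep_mem h hmono z) hx
    · rw [if_neg hall]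
      have hz'' : z' ∈ L := by
        rcases List.mem_cons.mp hz' with hz1 | hz1
        · exact absurd (fun s _ => by rw [hz1]) hall
        · exact hz1
      exact ih z' hz'' x hx

/-- There exists a tree faithful to `E` on any region. -/
lemma exists_faithful (E : Ensemble p) (hmono : ∀ j, StrictMono (h j))
    (hcov : ∀ j, E.H j = Set.range (h j)) (zL zR : Cell n) :
    ∃ T : DTree p, Faithful T E (RegionSet n h zL zR) := by
  classical
  refine ⟨chain E n h (Finset.univ : Finset (Cell n)).toList, ?_⟩
  intro x hx
  obtain ⟨z, -, hz⟩ := by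
    simpa only [RegionSet, Set.mem_iUnion, Set.mem_setOf_eq, exists_prop] using hx
  exact chain_eval h E hmono hcov _ z (by simp [Finset.mem_toList]) x hz

end Aux
/-- For a region `(zL, zR)`, a feature `j` and a level `l` with
`zL j ≤ l < zR j`:
`max{Φ(zL, zR_{jl}), Φ(zL_{jl}, zR)} ≤ Φ(zL, zR) ≤ 𝟙_{jl}(zL, zR) + max{Φ(zL, zR_{jl}), Φ(zL_{jl}, zR)}`. -/
theorem phi_split_bounds {p : ℕ} (E : Ensemble p) (n : Fin p → ℕ) (h : ∀ j, Fin (n j) → ℝ)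
    (hmono : ∀ j, StrictMono (h j)) (hcov : ∀ j, E.H j = Set.range (h j))
    (zL zR : Cell n) (hreg : ∀ j, (zL j : ℕ) ≤ (zR j : ℕ))
    (j : Fin p) (l : Fin (n j)) (hl1 : (zL j : ℕ) ≤ (l : ℕ)) (hl2 : (l : ℕ) < (zR j : ℕ)) :
    max (Phi E n h zL (splitR zR j l)) (Phi E n h (splitL zL j l) zR) ≤ Phi E n h zL zR ∧
    Phi E n h zL zR ≤ ind E n h zL zR j l +
      max (Phi E n h zL (splitR zR j l)) (Phi E n h (splitL zL j l) zR) := by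
  classical
  set DL := {d : ℕ | ∃ T : DTree p, Faithful T E (RegionSet n h zL (splitR zR j l)) ∧ T.depth = d} with hDL
  set DR := {d : ℕ | ∃ T : DTree p, Faithful T E (RegionSet n h (splitL zL j l) zR) ∧ T.depth = d} with hDR
  set DB := {d : ℕ | ∃ T : DTree p, Faithful T E (RegionSet n h zL zR) ∧ T.depth = d} with hDB
  have hPL : Phi E n h zL (splitR zR j l) = sInf DL := rfl
  have hPR : Phi E n h (splitL zL j l) zR = sInf DR := rfl
  have hPB : Phi E n h zL zR = sInf DB := rfl
  have hsR : ∀ j', (splitR zR j l) j' = if hj : j' = j then hj ▸ l.castSucc else zR j' := by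
    intro j'
    by_cases hj : j' = j
    · subst hj; simp [splitR]
    · simp [splitR, Function.update_of_ne hj, hj]
  have hsL : ∀ j', (splitL zL j l) j' = if hj : j' = j then hj ▸ l.succ else zL j' := by
    intro j'
    by_cases hj : j' = j
    · subst hj; simp [splitL]
    · simp [splitL, Function.update_of_ne hj, hj]
  have hsRv : ((splitR zR j l) j : ℕ) = (l : ℕ) := by rw [hsR j]; simp
  have hsLv : ((splitL zL j l) j : ℕ) = (l : ℕ) + 1 := by rw [hsL j]; simp
  have hsRv' : ∀ j' ≠ j, ((splitR zR j l) j' : ℕ) = (zR j' : ℕ) := by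
    intro j' hj; rw [hsR j', dif_neg hj]
  have hsLv' : ∀ j' ≠ j, ((splitL zL j l) j' : ℕ) = (zL j' : ℕ) := by
    intro j' hj; rw [hsL j', dif_neg hj]
  -- Region subset lemmas
  have hsubL : RegionSet n h zL (splitR zR j l) ⊆ RegionSet n h zL zR := by
    apply Set.biUnion_subset_biUnion_left
    intro z hz j'
    rcases eq_or_ne j' j with rfl | hj
    · have := hz j'; rw [hsRv] at this; omega
    · have := hz j'; rw [hsRv' j' hj] at this; omega
  have hsubR : RegionSet n h (splitL zL j l) zR ⊆ RegionSet n h zL zR := by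
    apply Set.biUnion_subset_biUnion_left
    intro z hz j'
    rcases eq_or_ne j' j with rfl | hj
    · have := hz j'; rw [hsLv] at this; omega
    · have := hz j'; rw [hsLv' j' hj] at this; omega
  have hunion : RegionSet n h zL zR ⊆
      RegionSet n h zL (splitR zR j l) ∪ RegionSet n h (splitL zL j l) zR := by
    intro x hx
    obtain ⟨z, hzEncl, hz⟩ := by
      simpa only [RegionSet, Set.mem_iUnion, Set.mem_setOf_eq, exists_prop] using hx
    by_cases hc : (z j : ℕ) ≤ (l : ℕ)
    · left
      refine Set.mem_biUnion (s := {z : Cell n | Encl zL (splitR zR j l) z}) ?_ hz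
      intro j'
      rcases eq_or_ne j' j with rfl | hj
      · rw [hsRv]; exact ⟨(hzEncl j').1, hc⟩
      · rw [hsRv' j' hj]; exact hzEncl j'
    · right
      refine Set.mem_biUnion (s := {z : Cell n | Encl (splitL zL j l) zR z}) ?_ hz
      intro j'
      rcases eq_or_ne j' j with rfl | hj
      · rw [hsLv]; exact ⟨by omega, (hzEncl j').2⟩
      · rw [hsLv' j' hj]; exact hzEncl j'
  -- membership coordinate facts
  have hmemL : ∀ x ∈ RegionSet n h zL (splitR zR j l), x j ≤ h j l := by
    intro x hx
    obtain ⟨z, hzEncl, hz⟩ := by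
      simpa only [RegionSet, Set.mem_iUnion, Set.mem_setOf_eq, exists_prop] using hx
    have hzj : (z j : ℕ) ≤ (l : ℕ) := by have := (hzEncl j).2; rwa [hsRv] at this
    exact (box_le_iff h hz j l).mpr hzj
  have hmemR : ∀ x ∈ RegionSet n h (splitL zL j l) zR, ¬ x j ≤ h j l := by
    intro x hx
    obtain ⟨z, hzEncl, hz⟩ := by
      simpa only [RegionSet, Set.mem_iUnion, Set.mem_setOf_eq, exists_prop] using hx
    have hzj : (l : ℕ) < (z j : ℕ) := by have := (hzEncl j).1; rw [hsLv] at this; omega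
    intro hle
    have := (box_le_iff h hz j l).mp hle
    omega
  have hneL : DL.Nonempty := by
    obtain ⟨T, hT⟩ := exists_faithful h E hmono hcov zL (splitR zR j l)
    exact ⟨T.depth, T, hT, rfl⟩
  have hneR : DR.Nonempty := by
    obtain ⟨T, hT⟩ := exists_faithful h E hmono hcov (splitL zL j l) zR
    exact ⟨T.depth, T, hT, rfl⟩
  have hneB : DB.Nonempty := by
    obtain ⟨T, hT⟩ := exists_faithful h E hmono hcov zL zR
    exact ⟨T.depth, T, hT, rfl⟩
  obtain ⟨TB, hTB, hTBd⟩ := Nat.sInf_mem hneB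
  obtain ⟨T1, hT1, hT1d⟩ := Nat.sInf_mem hneL
  obtain ⟨T2, hT2, hT2d⟩ := Nat.sInf_mem hneR
  constructor
  · -- lower bound
    rw [hPL, hPR, hPB]
    refine max_le ?_ ?_
    · exact le_trans (Nat.sInf_le ⟨TB, fun x hx => hTB x (hsubL hx), rfl⟩) hTBd.le
    · exact le_trans (Nat.sInf_le ⟨TB, fun x hx => hTB x (hsubR hx), rfl⟩) hTBd.le
  · -- upper bound
    by_cases hind : Phi E n h zL (splitR zR j l) = 0 ∧ Phi E n h (splitL zL j l) zR = 0 ∧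
        SameClass E n h zL zR
    · have hind0 : ind E n h zL zR j l = 0 := by rw [ind, if_pos hind]
      rw [hind0, zero_add]
      obtain ⟨hP1, hP2, hsame⟩ := hind
      -- T1 and T2 are leaves
      rw [← hPL, hP1] at hT1d
      rw [← hPR, hP2] at hT2d
      obtain ⟨c1, rfl⟩ : ∃ c, T1 = DTree.leaf c := by
        cases T1 with
        | leaf c => exact ⟨c, rfl⟩
        | node _ _ _ _ => simp [DTree.depth] at hT1d
      obtain ⟨c2, rfl⟩ : ∃ c, T2 = DTree.leaf c := by
        cases T2 with
        | leaf c => exact ⟨c, rfl⟩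
        | node _ _ _ _ => simp [DTree.depth] at hT2d
      -- Box zL is in the left region, Box zR in the right region
      have hBoxL : Box n h zL ⊆ RegionSet n h zL (splitR zR j l) := by
        refine Set.subset_biUnion_of_mem (u := fun z => Box n h z) ?_
        intro j'
        rcases eq_or_ne j' j with rfl | hj
        · rw [hsRv]; exact ⟨le_rfl, hl1⟩
        · rw [hsRv' j' hj]; exact ⟨le_rfl, hreg j'⟩
      have hBoxR : Box n h zR ⊆ RegionSet n h (splitL zL j l) zR := by
        refine Set.subset_biUnion_of_mem (u := fun z => Box n h z) ?_
        intro j'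
        rcases eq_or_ne j' j with rfl | hj
        · rw [hsLv]; exact ⟨by omega, le_rfl⟩
        · rw [hsLv' j' hj]; exact ⟨hreg j', le_rfl⟩
      have hc12 : c1 = c2 := by
        have h1 : c1 = E.F (rep n h zL) := hT1 _ (hBoxL (rep_mem h hmono zL))
        have h2 : c2 = E.F (rep n h zR) := hT2 _ (hBoxR (rep_mem h hmono zR))
        rw [h1, h2]
        exact hsame _ (rep_mem h hmono zL) _ (rep_mem h hmono zR)
      have : (0 : ℕ) ∈ DB := by
        refine ⟨DTree.leaf c1, ?_, rfl⟩
        intro x hx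
        rcases hunion hx with hx' | hx'
        · exact hT1 x hx'
        · rw [hc12]; exact hT2 x hx'
      rw [hPB]
      exact le_trans (Nat.sInf_le this) (Nat.zero_le _)
    · have hind1 : ind E n h zL zR j l = 1 := by rw [ind, if_neg hind]
      rw [hind1]
      have : (1 + max T1.depth T2.depth) ∈ DB := by
        refine ⟨DTree.node j (h j l) T1 T2, ?_, rfl⟩
        intro x hx
        rcases hunion hx with hx' | hx'
        · simp only [DTree.eval, if_pos (hmemL x hx')]
          exact hT1 x hx'
        · simp only [DTree.eval, if_neg (hmemR x hx')]
          exact hT2 x hx'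
      calc Phi E n h zL zR ≤ 1 + max T1.depth T2.depth := hPB ▸ Nat.sInf_le this
        _ = 1 + max (Phi E n h zL (splitR zR j l)) (Phi E n h (splitL zL j l) zR) := by
            rw [hT1d, hT2d, hPL, hPR]
end

section
/- Let 𝒯 be a tree ensemble on ℝ^p, (z^L,z^R) a region, j a feature and l a level with z^L_j ≤ l < z^R_j. Then the conjunction [Φ(z^L,z^R_{jl}) = Φ(z^L_{jl},z^R) = 0 and F_𝒯(z^L) = F_𝒯(z^R)] holds if and only if Φ(z^L,z^R) = 0. Consequently, the indicator 𝟙_{jl}(z^L,z^R) takes the same value for all admissible pairs (j,l). -/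
section Aux

namespace DTree

/-- Graft a continuation onto each leaf of a tree. -/
def bind' {p : ℕ} : DTree p → (ℕ → DTree p) → DTree p
  | leaf c, k => k c
  | node j t L R, k => node j t (L.bind' k) (R.bind' k)

lemma eval_bind' {p : ℕ} (T : DTree p) (k : ℕ → DTree p) (x : Fin p → ℝ) :
    (T.bind' k).eval x = (k (T.eval x)).eval x := by
  induction T with
  | leaf c => rfl
  | node j t L R ihL ihR =>
    simp only [bind', eval]
    split <;> simp [*]

/-- A tree that evaluates a list of trees and feeds the results into `g`. -/
def big {p : ℕ} : List (DTree p) → (List ℕ → ℕ) → DTree p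
  | [], g => leaf (g [])
  | t :: ts, g => t.bind' (fun c => big ts (fun cs => g (c :: cs)))

lemma eval_big {p : ℕ} (ts : List (DTree p)) (g : List ℕ → ℕ) (x : Fin p → ℝ) :
    (big ts g).eval x = g (ts.map (fun t => t.eval x)) := by
  induction ts generalizing g with
  | nil => rfl
  | cons t ts ih => simp [big, eval_bind', ih]

end DTree

lemma Ensemble.F_eq_of_evals {p : ℕ} (E : Ensemble p) (x y : Fin p → ℝ)
    (hxy : ∀ i, (E.tree i).eval x = (E.tree i).eval y) : E.F x = E.F y := by
  have hs : ∀ c, E.score x c = E.score y c := by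
    intro c
    unfold Ensemble.score
    congr 1
    ext i
    simp [hxy i]
  unfold Ensemble.F
  simp only [hs]

/-- A faithful tree always exists (even on all of `ℝ^p`). -/
lemma exists_faithful_s16 {p : ℕ} (E : Ensemble p) (S : Set (Fin p → ℝ)) :
    ∃ T : DTree p, Faithful T E S := by
  classical
  set ev : (Fin p → ℝ) → List ℕ := fun x => List.ofFn (fun i => (E.tree i).eval x) with hev
  refine ⟨DTree.big (List.ofFn E.tree)
    (fun cs => if hc : ∃ x, ev x = cs then E.F hc.choose else 0), ?_⟩
  intro x _
  rw [DTree.eval_big]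
  have hmap : (List.ofFn E.tree).map (fun t => t.eval x) = ev x := by
    simp [hev, List.map_ofFn]
    rfl
  rw [hmap]
  have hex : ∃ y, ev y = ev x := ⟨x, rfl⟩
  rw [dif_pos hex]
  apply E.F_eq_of_evals
  have h2 := (List.ofFn_inj).mp hex.choose_spec
  intro i
  exact congrFun h2 i

lemma phi_zero_iff {p : ℕ} (E : Ensemble p) (n : Fin p → ℕ) (h : ∀ j, Fin (n j) → ℝ)
    (zL zR : Cell n) :
    Phi E n h zL zR = 0 ↔ ∃ c, Faithful (DTree.leaf c) E (RegionSet n h zL zR) := by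
  have hne : {d : ℕ | ∃ T : DTree p, Faithful T E (RegionSet n h zL zR) ∧ T.depth = d}.Nonempty := by
    obtain ⟨T, hT⟩ := exists_faithful_s16 E (RegionSet n h zL zR)
    exact ⟨T.depth, T, hT, rfl⟩
  rw [Phi, Nat.sInf_eq_zero]
  constructor
  · rintro (⟨T, hT, hd⟩ | hempty)
    · cases T with
      | leaf c => exact ⟨c, hT⟩
      | node j t L R => simp [DTree.depth] at hd
    · rw [hempty] at hne
      exact absurd hne (by simp)
  · rintro ⟨c, hc⟩
    exact Or.inl ⟨_, hc, rfl⟩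

lemma box_nonempty {p : ℕ} (n : Fin p → ℕ) (h : ∀ j, Fin (n j) → ℝ)
    (hmono : ∀ j, StrictMono (h j)) (z : Cell n) : (Box n h z).Nonempty := by
  classical
  refine ⟨fun j =>
    if hz0 : (z j : ℕ) = 0 then
      (if hzn : (z j : ℕ) < n j then h j ⟨(z j : ℕ), hzn⟩ - 1 else 0)
    else
      (if hzn : (z j : ℕ) < n j then
        (h j ⟨(z j : ℕ) - 1, by have := (z j).isLt; omega⟩ + h j ⟨(z j : ℕ), hzn⟩) / 2
       else h j ⟨(z j : ℕ) - 1, by have := (z j).isLt; omega⟩ + 1), ?_⟩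
  intro j
  constructor
  · intro k hk
    have hz0 : ¬ ((z j : ℕ) = 0) := by omega
    have hk1 : (k : ℕ) ≤ (z j : ℕ) - 1 := by omega
    have hle : h j k ≤ h j ⟨(z j : ℕ) - 1, by have := (z j).isLt; omega⟩ :=
      (hmono j).monotone (by simpa [Fin.le_def] using hk1)
    simp only [dif_neg hz0]
    by_cases hzn : (z j : ℕ) < n j
    · simp only [dif_pos hzn]
      have hlt : h j ⟨(z j : ℕ) - 1, by have := (z j).isLt; omega⟩ < h j ⟨(z j : ℕ), hzn⟩ :=
        hmono j (by simp only [Fin.mk_lt_mk]; omega)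
      linarith
    · simp only [dif_neg hzn]
      linarith
  · intro k hk
    have hzn : (z j : ℕ) < n j := lt_of_le_of_lt hk k.isLt
    have hle : h j ⟨(z j : ℕ), hzn⟩ ≤ h j k := (hmono j).monotone (by simpa [Fin.le_def] using hk)
    by_cases hz0 : (z j : ℕ) = 0
    · simp only [dif_pos hz0, dif_pos hzn]
      have : h j ⟨(z j : ℕ), hzn⟩ - 1 < h j ⟨(z j : ℕ), hzn⟩ := by linarith
      linarith
    · simp only [dif_neg hz0, dif_pos hzn]
      have hlt : h j ⟨(z j : ℕ) - 1, by have := (z j).isLt; omega⟩ < h j ⟨(z j : ℕ), hzn⟩ :=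
        hmono j (by simp only [Fin.mk_lt_mk]; omega)
      linarith

lemma box_subset_region {p : ℕ} (n : Fin p → ℕ) (h : ∀ j, Fin (n j) → ℝ)
    {zL zR z : Cell n} (henc : Encl zL zR z) : Box n h z ⊆ RegionSet n h zL zR := by
  intro x hx
  exact Set.mem_biUnion henc hx

lemma region_mono {p : ℕ} (n : Fin p → ℕ) (h : ∀ j, Fin (n j) → ℝ)
    {zL zR zL' zR' : Cell n}
    (hL : ∀ j, (zL j : ℕ) ≤ (zL' j : ℕ)) (hR : ∀ j, (zR' j : ℕ) ≤ (zR j : ℕ)) :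
    RegionSet n h zL' zR' ⊆ RegionSet n h zL zR := by
  intro x hx
  simp only [RegionSet, Set.mem_iUnion] at hx ⊢
  obtain ⟨z, hz, hxz⟩ := hx
  exact ⟨z, fun j' => ⟨le_trans (hL j') (hz j').1, le_trans (hz j').2 (hR j')⟩, hxz⟩

end Aux

lemma splitR_apply_self {p : ℕ} {n : Fin p → ℕ} (zR : Cell n) (j : Fin p) (l : Fin (n j)) :
    ((splitR zR j l j : ℕ)) = (l : ℕ) := by
  simp [splitR, Function.update_self]

lemma splitL_apply_self {p : ℕ} {n : Fin p → ℕ} (zL : Cell n) (j : Fin p) (l : Fin (n j)) :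
    ((splitL zL j l j : ℕ)) = (l : ℕ) + 1 := by
  simp [splitL, Function.update_self]

lemma splitR_apply_ne {p : ℕ} {n : Fin p → ℕ} (zR : Cell n) (j : Fin p) (l : Fin (n j))
    {j' : Fin p} (hj : j' ≠ j) : splitR zR j l j' = zR j' := by
  simp [splitR, Function.update_of_ne hj]

lemma splitL_apply_ne {p : ℕ} {n : Fin p → ℕ} (zL : Cell n) (j : Fin p) (l : Fin (n j))
    {j' : Fin p} (hj : j' ≠ j) : splitL zL j l j' = zL j' := by
  simp [splitL, Function.update_of_ne hj]

lemma key_iff {p : ℕ} (E : Ensemble p) (n : Fin p → ℕ) (h : ∀ j, Fin (n j) → ℝ)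
    (hmono : ∀ j, StrictMono (h j))
    (zL zR : Cell n) (hreg : ∀ j, (zL j : ℕ) ≤ (zR j : ℕ))
    (j : Fin p) (l : Fin (n j)) (hl1 : (zL j : ℕ) ≤ (l : ℕ)) (hl2 : (l : ℕ) < (zR j : ℕ)) :
    (Phi E n h zL (splitR zR j l) = 0 ∧ Phi E n h (splitL zL j l) zR = 0 ∧
        SameClass E n h zL zR) ↔ Phi E n h zL zR = 0 := by
  classical
  -- subregion inclusions
  have sub1 : RegionSet n h zL (splitR zR j l) ⊆ RegionSet n h zL zR := by
    refine region_mono n h (fun _ => le_rfl) (fun j' => ?_)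
    by_cases hj : j' = j
    · subst hj; rw [splitR_apply_self]; omega
    · rw [splitR_apply_ne _ _ _ hj]
  have sub2 : RegionSet n h (splitL zL j l) zR ⊆ RegionSet n h zL zR := by
    refine region_mono n h (fun j' => ?_) (fun _ => le_rfl)
    by_cases hj : j' = j
    · subst hj; rw [splitL_apply_self]; omega
    · rw [splitL_apply_ne _ _ _ hj]
  -- zL is enclosed in the left subregion, zR in the right one
  have encL : Encl zL (splitR zR j l) zL := by
    intro j'
    refine ⟨le_rfl, ?_⟩
    by_cases hj : j' = j
    · subst hj; rw [splitR_apply_self]; exact hl1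
    · rw [splitR_apply_ne _ _ _ hj]; exact hreg j'
  have encR : Encl (splitL zL j l) zR zR := by
    intro j'
    refine ⟨?_, le_rfl⟩
    by_cases hj : j' = j
    · subst hj; rw [splitL_apply_self]; omega
    · rw [splitL_apply_ne _ _ _ hj]; exact hreg j'
  have encLL : Encl zL zR zL := fun j' => ⟨le_rfl, hreg j'⟩
  have encRR : Encl zL zR zR := fun j' => ⟨hreg j', le_rfl⟩
  -- covering
  have cover : ∀ x ∈ RegionSet n h zL zR,
      x ∈ RegionSet n h zL (splitR zR j l) ∨ x ∈ RegionSet n h (splitL zL j l) zR := by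
    intro x hx
    simp only [RegionSet, Set.mem_iUnion] at hx
    obtain ⟨z, hz, hxz⟩ := hx
    by_cases hc : (z j : ℕ) ≤ (l : ℕ)
    · left
      refine box_subset_region n h (fun j' => ⟨(hz j').1, ?_⟩) hxz
      by_cases hj : j' = j
      · subst hj; rw [splitR_apply_self]; exact hc
      · rw [splitR_apply_ne _ _ _ hj]; exact (hz j').2
    · right
      refine box_subset_region n h (fun j' => ⟨?_, (hz j').2⟩) hxz
      by_cases hj : j' = j
      · subst hj; rw [splitL_apply_self]; omega
      · rw [splitL_apply_ne _ _ _ hj]; exact (hz j').1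
  obtain ⟨x0, hx0⟩ := box_nonempty n h hmono zL
  obtain ⟨y0, hy0⟩ := box_nonempty n h hmono zR
  constructor
  · rintro ⟨h1, h2, h3⟩
    obtain ⟨c1, hc1⟩ := (phi_zero_iff E n h _ _).mp h1
    obtain ⟨c2, hc2⟩ := (phi_zero_iff E n h _ _).mp h2
    have hcx : c1 = E.F x0 := hc1 x0 (box_subset_region n h encL hx0)
    have hcy : c2 = E.F y0 := hc2 y0 (box_subset_region n h encR hy0)
    have hcc : c1 = c2 := by rw [hcx, hcy]; exact h3 x0 hx0 y0 hy0
    refine (phi_zero_iff E n h _ _).mpr ⟨c1, fun x hx => ?_⟩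
    rcases cover x hx with hx' | hx'
    · exact hc1 x hx'
    · rw [show (DTree.leaf c1 : DTree p).eval x = c1 from rfl, hcc]
      exact hc2 x hx'
  · intro h0
    obtain ⟨c, hc⟩ := (phi_zero_iff E n h _ _).mp h0
    refine ⟨(phi_zero_iff E n h _ _).mpr ⟨c, fun x hx => hc x (sub1 hx)⟩,
            (phi_zero_iff E n h _ _).mpr ⟨c, fun x hx => hc x (sub2 hx)⟩,
            fun x hx y hy => ?_⟩
    have h1 : c = E.F x := hc x (box_subset_region n h encLL hx)
    have h2 : c = E.F y := hc y (box_subset_region n h encRR hy)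
    rw [← h1, ← h2]

/-- For a feature `j` and level `l` with `zL j ≤ l < zR j`, the conjunction
`Φ(zL, zR_{jl}) = Φ(zL_{jl}, zR) = 0 ∧ F_𝒯(zL) = F_𝒯(zR)` holds iff `Φ(zL, zR) = 0`; hence
the indicator `𝟙_{jl}(zL, zR)` takes the same value for all admissible pairs `(j, l)`. -/
theorem indicator_independent {p : ℕ} (E : Ensemble p) (n : Fin p → ℕ)
    (h : ∀ j, Fin (n j) → ℝ)
    (hmono : ∀ j, StrictMono (h j)) (hcov : ∀ j, E.H j = Set.range (h j))
    (zL zR : Cell n) (hreg : ∀ j, (zL j : ℕ) ≤ (zR j : ℕ))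
    (j : Fin p) (l : Fin (n j)) (hl1 : (zL j : ℕ) ≤ (l : ℕ)) (hl2 : (l : ℕ) < (zR j : ℕ)) :
    ((Phi E n h zL (splitR zR j l) = 0 ∧ Phi E n h (splitL zL j l) zR = 0 ∧
        SameClass E n h zL zR) ↔ Phi E n h zL zR = 0) ∧
    (∀ (j' : Fin p) (l' : Fin (n j')), (zL j' : ℕ) ≤ (l' : ℕ) → (l' : ℕ) < (zR j' : ℕ) →
      ind E n h zL zR j l = ind E n h zL zR j' l') := by
  classical
  have K := fun (j' : Fin p) (l' : Fin (n j')) hl1' hl2' =>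
    key_iff E n h hmono zL zR hreg j' l' hl1' hl2'
  refine ⟨K j l hl1 hl2, fun j' l' hl1' hl2' => ?_⟩
  simp only [ind]
  by_cases hP : Phi E n h zL zR = 0
  · rw [if_pos ((K j l hl1 hl2).mpr hP), if_pos ((K j' l' hl1' hl2').mpr hP)]
  · rw [if_neg (fun hc => hP ((K j l hl1 hl2).mp hc)),
        if_neg (fun hc => hP ((K j' l' hl1' hl2').mp hc))]
end
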